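/- Let 𝕂 be ℝ or ℂ, let 0 < q ≤ s < ∞ and 0 < p_1, …, p_n < ∞, and let E_1, …, E_n, F be Banach spaces over 𝕂. If a continuous n-linear operator T : E_1 × ⋯ × E_n → F is multiple (s,q;p_1,…,p_n)-mixing summing and q < p_k for some k ∈ {1,…,n}, then T = 0. -/

import Mathlib

open scoped BigOperators
noncomputable section

/-- The weak `ℓ^q` norm of a finite family in a normed space:
`sup_{‖φ‖ ≤ 1} (∑_j |φ(x_j)|^q)^{1/q}`. -/
def weakLpNorm (𝕂 : Type*) [RCLike 𝕂] {E : Type*} [NormedAddCommGroup E] [NormedSpace 𝕂 E]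
    {J : Type*} [Fintype J] (q : ℝ) (x : J → E) : ℝ :=
  ⨆ φ : {φ : E →L[𝕂] 𝕂 // ‖φ‖ ≤ 1}, (∑ j, ‖φ.1 (x j)‖ ^ q) ^ (1 / q)

/-- The mixed `(s,q)`-norm of a finite family `z` in `F`:
`inf ‖(τ_j)‖_{ℓ^ρ} ‖(y_j)‖_{w,s}` over factorizations `z_j = τ_j • y_j`, where
`1/ρ = 1/q - 1/s` (so `ρ = ∞`, i.e. the sup norm, when `s = q`). -/
def mixedNorm (𝕂 : Type*) [RCLike 𝕂] {F : Type*} [NormedAddCommGroup F] [NormedSpace 𝕂 F]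
    {J : Type*} [Fintype J] (s q : ℝ) (z : J → F) : ℝ :=
  sInf { c : ℝ | ∃ τ : J → 𝕂, ∃ y : J → F, (∀ j, z j = τ j • y j) ∧
      c = (if s = q then ⨆ j, ‖τ j‖
           else (∑ j, ‖τ j‖ ^ (1 / q - 1 / s)⁻¹) ^ (1 / q - 1 / s)) * weakLpNorm 𝕂 s y }

/-- `A` is multiple `(s,q;p₁,…,pₙ)`-mixing summing. -/
def MultipleMixingSumming (𝕂 : Type*) [RCLike 𝕂] {n : ℕ} {E : Fin n → Type*}
    [∀ i, NormedAddCommGroup (E i)] [∀ i, NormedSpace 𝕂 (E i)]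
    {F : Type*} [NormedAddCommGroup F] [NormedSpace 𝕂 F]
    (s q : ℝ) (p : Fin n → ℝ) (A : ((i : Fin n) → E i) → F) : Prop :=
  ∃ σ : ℝ, 0 ≤ σ ∧ ∀ (m : ℕ) (x : (i : Fin n) → Fin m → E i),
    mixedNorm 𝕂 s q (fun j : Fin n → Fin m => A (fun i => x i (j i))) ≤
      σ * ∏ i, weakLpNorm 𝕂 (p i) (x i)

/-- The multiple `(s,q;p₁,…,pₙ)`-mixing summing norm of `A`. -/
def mixingNorm (𝕂 : Type*) [RCLike 𝕂] {n : ℕ} {E : Fin n → Type*}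
    [∀ i, NormedAddCommGroup (E i)] [∀ i, NormedSpace 𝕂 (E i)]
    {F : Type*} [NormedAddCommGroup F] [NormedSpace 𝕂 F]
    (s q : ℝ) (p : Fin n → ℝ) (A : ((i : Fin n) → E i) → F) : ℝ :=
  sInf { σ : ℝ | 0 ≤ σ ∧ ∀ (m : ℕ) (x : (i : Fin n) → Fin m → E i),
    mixedNorm 𝕂 s q (fun j : Fin n → Fin m => A (fun i => x i (j i))) ≤
      σ * ∏ i, weakLpNorm 𝕂 (p i) (x i) }

section Aux

variable {𝕂 : Type*} [RCLike 𝕂] {E : Type*} [NormedAddCommGroup E] [NormedSpace 𝕂 E]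
  {J : Type*} [Fintype J]

lemma weakLpNorm_nonneg (q : ℝ) (x : J → E) : 0 ≤ weakLpNorm 𝕂 q x :=
  Real.iSup_nonneg fun _ => Real.rpow_nonneg
    (Finset.sum_nonneg fun _ _ => Real.rpow_nonneg (norm_nonneg _) _) _

lemma weakLpNorm_le {q : ℝ} {x : J → E} {B : ℝ}
    (h : ∀ φ : E →L[𝕂] 𝕂, ‖φ‖ ≤ 1 → (∑ j, ‖φ (x j)‖ ^ q) ^ (1 / q) ≤ B) :
    weakLpNorm 𝕂 q x ≤ B := by
  have : Nonempty {φ : E →L[𝕂] 𝕂 // ‖φ‖ ≤ 1} := ⟨⟨0, by simp⟩⟩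
  exact ciSup_le fun φ => h φ.1 φ.2

lemma le_weakLpNorm {q : ℝ} (hq : 0 < q) (x : J → E)
    (φ : E →L[𝕂] 𝕂) (hφ : ‖φ‖ ≤ 1) :
    (∑ j, ‖φ (x j)‖ ^ q) ^ (1 / q) ≤ weakLpNorm 𝕂 q x := by
  have hbdd : BddAbove (Set.range fun ψ : {φ : E →L[𝕂] 𝕂 // ‖φ‖ ≤ 1} =>
      (∑ j, ‖ψ.1 (x j)‖ ^ q) ^ (1 / q)) := by
    refine ⟨(∑ j, ‖x j‖ ^ q) ^ (1 / q), ?_⟩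
    rintro _ ⟨ψ, rfl⟩
    refine Real.rpow_le_rpow
      (Finset.sum_nonneg fun _ _ => Real.rpow_nonneg (norm_nonneg _) _)
      (Finset.sum_le_sum fun j _ => Real.rpow_le_rpow (norm_nonneg _) ?_ hq.le)
      (by positivity)
    calc ‖ψ.1 (x j)‖ ≤ ‖ψ.1‖ * ‖x j‖ := ψ.1.le_opNorm _
      _ ≤ 1 * ‖x j‖ := mul_le_mul_of_nonneg_right ψ.2 (norm_nonneg _)
      _ = ‖x j‖ := one_mul _
  exact le_ciSup hbdd (⟨φ, hφ⟩ : {φ : E →L[𝕂] 𝕂 // ‖φ‖ ≤ 1})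

end Aux

/-- if `T` is multiple `(s,q;p₁,…,pₙ)`-mixing summing and `q < pₖ`
for some `k`, then `T = 0`. -/
theorem multipleMixingSumming_eq_zero_of_lt
    {𝕂 : Type*} [RCLike 𝕂] {n : ℕ} (hn : 1 ≤ n)
    (s q : ℝ) (p : Fin n → ℝ) (hq : 0 < q) (hqs : q ≤ s) (hp : ∀ k, 0 < p k)
    (E : Fin n → Type*) [∀ i, NormedAddCommGroup (E i)] [∀ i, NormedSpace 𝕂 (E i)]
    [∀ i, CompleteSpace (E i)]
    (F : Type*) [NormedAddCommGroup F] [NormedSpace 𝕂 F] [CompleteSpace F]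
    (T : ContinuousMultilinearMap 𝕂 E F)
    (hT : MultipleMixingSumming 𝕂 s q p (⇑T))
    (hk : ∃ k : Fin n, q < p k) :
    T = 0 := by
  obtain ⟨k, hkq⟩ := hk
  obtain ⟨σ, hσ0, hσ⟩ := hT
  have hs : 0 < s := lt_of_lt_of_le hq hqs
  ext x
  rw [ContinuousMultilinearMap.zero_apply]
  by_contra hTx
  have hTx0 : 0 < ‖T x‖ := norm_pos_iff.2 hTx
  set C : ℝ := σ * ∏ i, ‖x i‖ with hC
  have hC0 : 0 ≤ C := mul_nonneg hσ0 (Finset.prod_nonneg fun _ _ => norm_nonneg _)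
  set δ : ℝ := 1 / q - 1 / p k with hδ
  have hδ0 : 0 < δ := sub_pos.2 (one_div_lt_one_div_of_lt hq hkq)
  -- Key growth estimate
  have key : ∀ m : ℕ, ((m + 1 : ℕ) : ℝ) ^ δ * ‖T x‖ ≤ C := by
    intro m
    set N : ℕ := m + 1 with hN
    haveI : NeZero N := ⟨Nat.succ_ne_zero m⟩
    have hNpos : (0 : ℝ) < (N : ℝ) := by positivity
    set X : (i : Fin n) → Fin N → E i :=
      fun i j => if i = k then x i else if j = 0 then x i else 0 with hX
    have hmain := hσ N X
    set Z : (Fin n → Fin N) → F := fun j => T (fun i => X i (j i)) with hZ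
    -- RHS bound
    have hRHS : σ * ∏ i, weakLpNorm 𝕂 (p i) (X i)
        ≤ σ * ((N : ℝ) ^ (1 / p k) * ∏ i, ‖x i‖) := by
      refine mul_le_mul_of_nonneg_left ?_ hσ0
      calc ∏ i, weakLpNorm 𝕂 (p i) (X i)
          ≤ ∏ i, (if i = k then (N : ℝ) ^ (1 / p k) else 1) * ‖x i‖ := by
            refine Finset.prod_le_prod (fun i _ => weakLpNorm_nonneg _ _) ?_
            intro i _
            by_cases hik : i = k
            · subst hik
              rw [if_pos rfl]
              refine weakLpNorm_le ?_
              intro φ hφ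
              have hφx : ‖φ (x i)‖ ≤ ‖x i‖ := by
                calc ‖φ (x i)‖ ≤ ‖φ‖ * ‖x i‖ := φ.le_opNorm _
                  _ ≤ 1 * ‖x i‖ := mul_le_mul_of_nonneg_right hφ (norm_nonneg _)
                  _ = ‖x i‖ := one_mul _
              have hsum : (∑ j : Fin N, ‖φ (X i j)‖ ^ p i)
                  = (N : ℝ) * ‖φ (x i)‖ ^ p i := by
                simp [hX, Finset.sum_const, Finset.card_fin, nsmul_eq_mul]
              rw [hsum, Real.mul_rpow hNpos.le (Real.rpow_nonneg (norm_nonneg _) _),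
                one_div, Real.rpow_rpow_inv (norm_nonneg _) (hp i).ne', ← one_div]
              exact mul_le_mul_of_nonneg_left hφx
                (Real.rpow_nonneg hNpos.le _)
            · rw [if_neg hik, one_mul]
              refine weakLpNorm_le ?_
              intro φ hφ
              have hsum : (∑ j : Fin N, ‖φ (X i j)‖ ^ p i) = ‖φ (x i)‖ ^ p i := by
                rw [Finset.sum_eq_single (0 : Fin N)]
                · simp [hX, hik]
                · intro b _ hb
                  simp [hX, hik, hb, Real.zero_rpow (hp i).ne']
                · intro h; exact absurd (Finset.mem_univ _) h
              rw [hsum, one_div, Real.rpow_rpow_inv (norm_nonneg _) (hp i).ne']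
              calc ‖φ (x i)‖ ≤ ‖φ‖ * ‖x i‖ := φ.le_opNorm _
                _ ≤ 1 * ‖x i‖ := mul_le_mul_of_nonneg_right hφ (norm_nonneg _)
                _ = ‖x i‖ := one_mul _
        _ = (N : ℝ) ^ (1 / p k) * ∏ i, ‖x i‖ := by
            rw [Finset.prod_mul_distrib,
              Finset.prod_ite_eq' Finset.univ k (fun _ => (N : ℝ) ^ (1 / p k))]
            simp
    -- LHS lower bound
    have hLHS : (N : ℝ) ^ (1 / q) * ‖T x‖
        ≤ mixedNorm 𝕂 s q Z := by
      obtain ⟨φ, hφ1, hφx⟩ := exists_dual_vector 𝕂 (T x) (norm_ne_zero_iff.2 hTx)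
      have hφle : ‖φ‖ ≤ 1 := le_of_eq hφ1
      have hφnorm : ‖φ (T x)‖ = ‖T x‖ := by
        rw [hφx, RCLike.norm_ofReal, abs_of_nonneg (norm_nonneg _)]
      refine le_csInf ⟨_, (fun _ => (1 : 𝕂)), Z,
        fun j => (one_smul 𝕂 (Z j)).symm, rfl⟩ ?_
      rintro c ⟨τ, y, hzy, rfl⟩
      set W := weakLpNorm 𝕂 s y with hW
      have hW0 : 0 ≤ W := weakLpNorm_nonneg _ _
      set K : ℝ := if s = q then ⨆ j, ‖τ j‖
          else (∑ j, ‖τ j‖ ^ (1 / q - 1 / s)⁻¹) ^ (1 / q - 1 / s) with hK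
      have hK0 : 0 ≤ K := by
        rw [hK]; split
        · exact Real.iSup_nonneg fun _ => norm_nonneg _
        · exact Real.rpow_nonneg
            (Finset.sum_nonneg fun _ _ => Real.rpow_nonneg (norm_nonneg _) _) _
      -- lower bound on the q-sum
      have hsumlow : (N : ℝ) * ‖T x‖ ^ q ≤ ∑ j, ‖φ (Z j)‖ ^ q := by
        have hinj : Function.Injective
            (fun l : Fin N => (fun i => if i = k then l else 0 : Fin n → Fin N)) := by
          intro a b hab
          have := congrFun hab k
          simpa using this
        have hZe : ∀ l : Fin N, Z (fun i => if i = k then l else 0) = T x := by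
          intro l
          show T _ = T x
          congr 1
          funext i
          by_cases hik : i = k
          · subst hik; simp [hX]
          · simp [hX, hik]
        have hc : ∑ l : Fin N, ‖φ (Z (fun i => if i = k then l else 0))‖ ^ q
            = (N : ℝ) * ‖T x‖ ^ q := by
          simp [hZe, hφnorm, Finset.sum_const, Finset.card_fin, nsmul_eq_mul]
        calc (N : ℝ) * ‖T x‖ ^ q
            = ∑ l : Fin N, ‖φ (Z (fun i => if i = k then l else 0))‖ ^ q := hc.symm
          _ = ∑ j ∈ Finset.univ.image
                (fun l : Fin N => (fun i => if i = k then l else 0 : Fin n → Fin N)),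
                ‖φ (Z j)‖ ^ q :=
              (Finset.sum_image (f := fun j => ‖φ (Z j)‖ ^ q)
                (fun a _ b _ h => hinj h)).symm
          _ ≤ ∑ j, ‖φ (Z j)‖ ^ q :=
              Finset.sum_le_sum_of_subset_of_nonneg (Finset.subset_univ _)
                (fun j _ _ => Real.rpow_nonneg (norm_nonneg _) _)
      have hzj : ∀ j, ‖φ (Z j)‖ ^ q = ‖τ j‖ ^ q * ‖φ (y j)‖ ^ q := by
        intro j
        rw [hzy j, map_smul, norm_smul,
          Real.mul_rpow (norm_nonneg _) (norm_nonneg _)]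
      -- upper bound on the q-sum
      have hupper : ∑ j, ‖φ (Z j)‖ ^ q ≤ (K * W) ^ q := by
        rw [Real.mul_rpow hK0 hW0]
        by_cases hsq : s = q
        · rw [hK, if_pos hsq]
          set K' : ℝ := ⨆ j, ‖τ j‖ with hK'
          have hK'0 : 0 ≤ K' := Real.iSup_nonneg fun _ => norm_nonneg _
          have hKj : ∀ j : Fin n → Fin N, ‖τ j‖ ≤ K' :=
            fun j => le_ciSup (f := fun j : Fin n → Fin N => ‖τ j‖)
              (Set.Finite.bddAbove (Set.finite_range _)) j
          have hWq : ∑ j, ‖φ (y j)‖ ^ q ≤ W ^ q := by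
            have h1 := le_weakLpNorm (𝕂 := 𝕂) hq y φ hφle
            rw [hsq] at hW
            have h2 : ((∑ j, ‖φ (y j)‖ ^ q) ^ (1 / q)) ^ q
                ≤ W ^ q := Real.rpow_le_rpow (Real.rpow_nonneg
                  (Finset.sum_nonneg fun _ _ => Real.rpow_nonneg (norm_nonneg _) _) _)
                  (hW ▸ h1) hq.le
            rwa [one_div, Real.rpow_inv_rpow
              (Finset.sum_nonneg fun _ _ => Real.rpow_nonneg (norm_nonneg _) _)
              hq.ne'] at h2
          calc ∑ j, ‖φ (Z j)‖ ^ q = ∑ j, ‖τ j‖ ^ q * ‖φ (y j)‖ ^ q :=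
                Finset.sum_congr rfl fun j _ => hzj j
            _ ≤ ∑ j, K' ^ q * ‖φ (y j)‖ ^ q :=
                Finset.sum_le_sum fun j _ => mul_le_mul_of_nonneg_right
                  (Real.rpow_le_rpow (norm_nonneg _) (hKj j) hq.le)
                  (Real.rpow_nonneg (norm_nonneg _) _)
            _ = K' ^ q * ∑ j, ‖φ (y j)‖ ^ q := by rw [Finset.mul_sum]
            _ ≤ K' ^ q * W ^ q :=
                mul_le_mul_of_nonneg_left hWq (Real.rpow_nonneg hK'0 _)
        · rw [hK, if_neg hsq]
          have hqlt : q < s := hqs.lt_of_ne fun h => hsq h.symm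
          set r : ℝ := 1 / q - 1 / s with hr
          have hr0 : 0 < r := sub_pos.2 (one_div_lt_one_div_of_lt hq hqlt)
          set u : ℝ := (q * r)⁻¹ with hu
          set v : ℝ := s / q with hv
          have hqr : q * r = 1 - q / s := by
            rw [hr]; field_simp
          have hqr0 : 0 < q * r := mul_pos hq hr0
          have hqr1 : q * r < 1 := by
            rw [hqr]
            have : 0 < q / s := div_pos hq hs
            linarith
          have hconj : Real.HolderConjugate u v := by
            rw [Real.holderConjugate_iff]; constructor
            · rw [hu]; exact one_lt_inv₀ hqr0 |>.2 hqr1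
            · rw [hu, hv, inv_inv]
              rw [hqr]
              field_simp
              ring
          have hHold := Real.inner_le_Lp_mul_Lq_of_nonneg
            (Finset.univ (α := Fin n → Fin N))
            (f := fun j => ‖τ j‖ ^ q) (g := fun j => ‖φ (y j)‖ ^ q)
            hconj
            (fun j _ => Real.rpow_nonneg (norm_nonneg _) _)
            (fun j _ => Real.rpow_nonneg (norm_nonneg _) _)
          have hfu : ∀ j : Fin n → Fin N, (‖τ j‖ ^ q) ^ u = ‖τ j‖ ^ r⁻¹ := by
            intro j
            rw [← Real.rpow_mul (norm_nonneg _)]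
            congr 1
            rw [hu]
            field_simp
          have hgv : ∀ j : Fin n → Fin N, (‖φ (y j)‖ ^ q) ^ v = ‖φ (y j)‖ ^ s := by
            intro j
            rw [← Real.rpow_mul (norm_nonneg _)]
            congr 1
            rw [hv]
            field_simp
          have hSτ : (∑ j, (‖τ j‖ ^ q) ^ u) ^ (1 / u)
              = ((∑ j, ‖τ j‖ ^ r⁻¹) ^ r) ^ q := by
            have h1 : (1 : ℝ) / u = r * q := by rw [hu]; field_simp
            have hsum : (∑ j, (‖τ j‖ ^ q) ^ u) = ∑ j, ‖τ j‖ ^ r⁻¹ :=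
              Finset.sum_congr rfl fun j _ => hfu j
            rw [hsum, h1, Real.rpow_mul
              (Finset.sum_nonneg fun _ _ => Real.rpow_nonneg (norm_nonneg _) _)]
          have hSy : (∑ j, (‖φ (y j)‖ ^ q) ^ v) ^ (1 / v)
              ≤ W ^ q := by
            have h1 : (1 : ℝ) / v = (1 / s) * q := by rw [hv]; field_simp
            have h2 : (∑ j, (‖φ (y j)‖ ^ q) ^ v) = ∑ j, ‖φ (y j)‖ ^ s :=
              Finset.sum_congr rfl fun j _ => hgv j
            rw [h1, h2, Real.rpow_mul
              (Finset.sum_nonneg fun _ _ => Real.rpow_nonneg (norm_nonneg _) _)]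
            exact Real.rpow_le_rpow (Real.rpow_nonneg
              (Finset.sum_nonneg fun _ _ => Real.rpow_nonneg (norm_nonneg _) _) _)
              (le_weakLpNorm (𝕂 := 𝕂) hs y φ hφle) hq.le
          calc ∑ j, ‖φ (Z j)‖ ^ q = ∑ j, ‖τ j‖ ^ q * ‖φ (y j)‖ ^ q :=
                Finset.sum_congr rfl fun j _ => hzj j
            _ ≤ (∑ j, (‖τ j‖ ^ q) ^ u) ^ (1 / u) * (∑ j, (‖φ (y j)‖ ^ q) ^ v) ^ (1 / v) :=
                hHold
            _ ≤ ((∑ j, ‖τ j‖ ^ r⁻¹) ^ r) ^ q * W ^ q := by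
                rw [hSτ]
                exact mul_le_mul_of_nonneg_left hSy
                  (Real.rpow_nonneg (Real.rpow_nonneg
                    (Finset.sum_nonneg fun _ _ => Real.rpow_nonneg (norm_nonneg _) _) _) _)
      -- combine
      have hfin : (N : ℝ) * ‖T x‖ ^ q ≤ (K * W) ^ q := le_trans hsumlow hupper
      have hKW0 : 0 ≤ K * W := mul_nonneg hK0 hW0
      have h2 := Real.rpow_le_rpow (by positivity) hfin (le_of_lt (one_div_pos.2 hq))
      rw [Real.mul_rpow hNpos.le (Real.rpow_nonneg (norm_nonneg _) _), one_div,
        Real.rpow_rpow_inv (norm_nonneg _) hq.ne',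
        Real.rpow_rpow_inv hKW0 hq.ne'] at h2
      rw [one_div]
      exact h2
    -- assemble
    have hchain : (N : ℝ) ^ (1 / q) * ‖T x‖
        ≤ σ * ((N : ℝ) ^ (1 / p k) * ∏ i, ‖x i‖) :=
      le_trans hLHS (le_trans hmain hRHS)
    have hsplit : (N : ℝ) ^ (1 / q) = (N : ℝ) ^ δ * (N : ℝ) ^ (1 / p k) := by
      rw [← Real.rpow_add hNpos]
      congr 1
      rw [hδ]; ring
    have hNpk : 0 < (N : ℝ) ^ (1 / p k) := Real.rpow_pos_of_pos hNpos _
    rw [hsplit] at hchain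
    have hfin2 : (N : ℝ) ^ δ * ‖T x‖ * (N : ℝ) ^ (1 / p k)
        ≤ C * (N : ℝ) ^ (1 / p k) := by
      calc (N : ℝ) ^ δ * ‖T x‖ * (N : ℝ) ^ (1 / p k)
          = (N : ℝ) ^ δ * (N : ℝ) ^ (1 / p k) * ‖T x‖ := by ring
        _ ≤ σ * ((N : ℝ) ^ (1 / p k) * ∏ i, ‖x i‖) := hchain
        _ = C * (N : ℝ) ^ (1 / p k) := by rw [hC]; ring
    exact le_of_mul_le_mul_right hfin2 hNpk
  -- derive contradiction
  obtain ⟨m, hm⟩ := exists_nat_gt ((C / ‖T x‖) ^ δ⁻¹)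
  have hb0 : (0 : ℝ) ≤ C / ‖T x‖ := div_nonneg hC0 hTx0.le
  have h1 : C / ‖T x‖ < ((m + 1 : ℕ) : ℝ) ^ δ := by
    have hlt : (C / ‖T x‖) ^ δ⁻¹ < ((m + 1 : ℕ) : ℝ) :=
      lt_of_lt_of_le hm (by push_cast; linarith)
    calc C / ‖T x‖ = ((C / ‖T x‖) ^ δ⁻¹) ^ δ :=
          (Real.rpow_inv_rpow hb0 hδ0.ne').symm
      _ < ((m + 1 : ℕ) : ℝ) ^ δ :=
          Real.rpow_lt_rpow (Real.rpow_nonneg hb0 _) hlt hδ0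
  have h2 : ((m + 1 : ℕ) : ℝ) ^ δ ≤ C / ‖T x‖ := (le_div_iff₀ hTx0).2 (key m)
  exact absurd h2 (not_le.2 h1)
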